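/- arXiv:math/0112076 — 2 statements merged into one kernel-verified Lean document; each statement's English description precedes it below -/
import Mathlib

section
/- Let $a_0, a_1, a_2$ be pairwise coprime positive integers. Then $s(a_0; a_1, a_2) + s(a_1; a_0, a_2) + s(a_2; a_0, a_1) = 1 - \frac{a_0^2 + a_1^2 + a_2^2}{3 a_0 a_1 a_2}$ (Zagier's reciprocity law in dimension 2). -/
open Finset

/-- Zagier's higher-dimensional Dedekind sum in dimension 2. -/
noncomputable def zagierSum2 (a₀ a₁ a₂ : ℕ) : ℝ :=
  (-1 / a₀) * ∑ k ∈ Finset.Ico 1 a₀,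
    Real.cot (Real.pi * k * a₁ / a₀) * Real.cot (Real.pi * k * a₂ / a₀)

namespace ZagierRecAux

open Polynomial Complex

noncomputable section

/-- `q n = 1 + X + ... + X^(n-1)` over `ℂ`. -/
def zq (n : ℕ) : ℂ[X] := ∑ i ∈ range n, X ^ i

lemma zq_mul : ∀ n : ℕ, zq n * (X - 1) = X ^ n - 1 := fun n => geom_sum_mul X n

lemma prod_erase_one {n : ℕ} (hn : 0 < n) :
    ∏ ζ ∈ (nthRootsFinset n (1:ℂ)).erase 1, (X - C ζ) = zq n := by
  have h1 : (X - C (1:ℂ)) * ∏ ζ ∈ (nthRootsFinset n (1:ℂ)).erase 1, (X - C ζ)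
      = ∏ ζ ∈ nthRootsFinset n (1:ℂ), (X - C ζ) :=
    Finset.mul_prod_erase _ (fun ζ => X - C ζ) (one_mem_nthRootsFinset hn)
  have h2 : (X - C (1:ℂ)) * ∏ ζ ∈ (nthRootsFinset n (1:ℂ)).erase 1, (X - C ζ)
      = (X - C 1) * zq n := by
    rw [h1, ← X_pow_sub_one_eq_prod hn (Complex.isPrimitiveRoot_exp n hn.ne'), ← zq_mul]
    ring_nf
    rw [map_one]
    ring
  exact mul_left_cancel₀ (X_sub_C_ne_zero 1) h2

lemma zq_monic {n : ℕ} (hn : 0 < n) : (zq n).Monic := by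
  rw [← prod_erase_one hn]
  exact monic_prod_of_monic _ _ fun ζ _ => monic_X_sub_C ζ

lemma zq_natDegree {n : ℕ} (hn : 0 < n) : (zq n).natDegree = n - 1 := by
  rw [← prod_erase_one hn, natDegree_prod_of_monic _ _ fun ζ _ => monic_X_sub_C ζ]
  simp [Finset.card_erase_of_mem (one_mem_nthRootsFinset hn),
    (Complex.isPrimitiveRoot_exp n hn.ne').card_nthRootsFinset]

lemma sum_range_cast (n : ℕ) : ∑ i ∈ range n, (i:ℂ) = n * (n-1) / 2 := by
  induction n with
  | zero => simp
  | succ m ih => rw [Finset.sum_range_succ, ih]; push_cast; ring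

lemma sum_range_cast2 (n : ℕ) : ∑ i ∈ range n, (i:ℂ) * ((i:ℂ) - 1) = n * (n-1) * (n-2) / 3 := by
  induction n with
  | zero => simp
  | succ m ih => rw [Finset.sum_range_succ, ih]; push_cast; ring

lemma eval_zq (n : ℕ) : eval 1 (zq n) = n := by simp [zq, eval_finset_sum]

lemma eval_d_zq (n : ℕ) : eval 1 (derivative (zq n)) = n * (n-1) / 2 := by
  rw [zq, derivative_sum, eval_finset_sum, ← sum_range_cast n]
  refine Finset.sum_congr rfl fun i _ => ?_
  simp [derivative_X_pow]

lemma eval_dd_zq (n : ℕ) : eval 1 (derivative (derivative (zq n))) = n * (n-1) * (n-2) / 3 := by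
  rw [zq, derivative_sum, derivative_sum, eval_finset_sum, ← sum_range_cast2 n]
  refine Finset.sum_congr rfl fun i _ => ?_
  rcases i with _ | _ | i
  · simp
  · simp
  · simp only [derivative_X_pow, derivative_mul, derivative_C, zero_mul, zero_add,
      eval_mul, eval_C, eval_pow, eval_X, one_pow, mul_one]
    push_cast
    ring

lemma pow_eq_one_of_coprime {m n : ℕ} (h : Nat.Coprime m n) {x : ℂ}
    (hm : x ^ m = 1) (hn : x ^ n = 1) : x = 1 := by
  have h1 : orderOf x ∣ m := orderOf_dvd_of_pow_eq_one hm
  have h2 : orderOf x ∣ n := orderOf_dvd_of_pow_eq_one hn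
  have : orderOf x ∣ 1 := h ▸ Nat.dvd_gcd h1 h2
  rw [Nat.dvd_one] at this
  exact orderOf_eq_one_iff.1 this


def zQp (a b c : ℕ) : ℂ[X] := (X^a - 1) * (X^b - 1) * (X^c - 1)

/-- numerator polynomial -/
def zPp (n a b c : ℕ) : ℂ[X] := X^(n-1) + X^(a-1) + X^(b-1) + X^(c-1)

lemma zQp_symm_bac (a b c : ℕ) : zQp a b c = zQp b a c := by unfold zQp; ring
lemma zQp_symm_cab (a b c : ℕ) : zQp a b c = zQp c a b := by unfold zQp; ring
lemma zPp_symm_bac (n a b c : ℕ) : zPp n a b c = zPp n b a c := by unfold zPp; ring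
lemma zPp_symm_cab (n a b c : ℕ) : zPp n a b c = zPp n c a b := by unfold zPp; ring

lemma eval_d_zQp (a b c : ℕ) {lam : ℂ} (hla : lam ^ a = 1) :
    eval lam (derivative (zQp a b c)) = a * lam^(a-1) * (lam^b - 1) * (lam^c - 1) := by
  unfold zQp
  simp only [derivative_mul, derivative_sub, derivative_one, derivative_X_pow, sub_zero,
    eval_mul, eval_add, eval_sub, eval_pow, eval_X, eval_one, eval_natCast, eval_C]
  rw [hla]
  ring

/-- the cotangent form of `(e^{2iθ}+1)/(e^{2iθ}-1)` -/
lemma exp_cot (θ : ℝ) (hs : Real.sin θ ≠ 0) :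
    (Complex.exp (θ * I))^2 + 1 = (-I * (Real.cot θ : ℂ)) * ((Complex.exp (θ * I))^2 - 1) := by
  have h1 : Complex.exp (θ * I) = Complex.cos θ + Complex.sin θ * I := by
    rw [Complex.exp_mul_I]
  have hpy : (Complex.sin θ)^2 + (Complex.cos θ)^2 = 1 := Complex.sin_sq_add_cos_sq θ
  have hcot : (Real.cot θ : ℂ) = Complex.cos θ / Complex.sin θ := by
    rw [Real.cot_eq_cos_div_sin]
    push_cast
    rfl
  have hsC : (Complex.sin θ) ≠ 0 := by
    rw [← Complex.ofReal_sin]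
    exact_mod_cast Complex.ofReal_ne_zero.2 hs
  rw [h1, hcot]
  rw [show -I * (Complex.cos θ / Complex.sin θ) * ((Complex.cos θ + Complex.sin θ * I)^2 - 1)
      = (-I * Complex.cos θ * ((Complex.cos θ + Complex.sin θ * I)^2 - 1)) / Complex.sin θ by ring]
  rw [eq_div_iff hsC]
  linear_combination (Complex.cos θ * ((Complex.sin θ)^2-1) * I + 2*(Complex.cos θ)^2* Complex.sin θ
    - Complex.sin θ + (Complex.sin θ)^3 + Complex.cos θ * I + Complex.sin θ) * Complex.I_sq
    - 2*Complex.sin θ*hpy + (Complex.cos θ * I + Complex.sin θ)*hpy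

section
variable {a b c : ℕ}

lemma sin_pi_ne (ha : 0 < a) (hab : Nat.Coprime a b) {k : ℕ} (hk1 : 1 ≤ k) (hka : k < a) :
    Real.sin (Real.pi * k * b / a) ≠ 0 := by
  intro h
  obtain ⟨m, hm⟩ := Real.sin_eq_zero_iff.1 h
  have haR : (a:ℝ) ≠ 0 := Nat.cast_ne_zero.2 ha.ne'
  have hmab : (m:ℝ) * a = k * b := by
    field_simp at hm
    nlinarith [Real.pi_pos, hm]
  have : (a:ℤ) ∣ (k*b : ℕ) := ⟨m, by exact_mod_cast (by push_cast; linarith [hmab] : ((k*b:ℕ):ℝ) = a * m)⟩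
  have hdvd : a ∣ k * b := by exact_mod_cast this
  have : a ∣ k := (Nat.Coprime.dvd_of_dvd_mul_right hab) hdvd
  exact absurd (Nat.le_of_dvd hk1 this) (by omega)

lemma pow_eq_exp_sq (ha : 0 < a) (k : ℕ) :
    (Complex.exp (2*Real.pi*I/a))^(k*b) = (Complex.exp ((Real.pi*k*b/a : ℝ) * I))^2 := by
  rw [← Complex.exp_nat_mul, ← Complex.exp_nat_mul]
  congr 1
  have haC : (a:ℂ) ≠ 0 := Nat.cast_ne_zero.2 ha.ne'
  push_cast
  field_simp

lemma term_eval (ha : 0 < a) (hb : 0 < b) (hc : 0 < c)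
    (hab : Nat.Coprime a b) (hac : Nat.Coprime a c) {k : ℕ} (hk1 : 1 ≤ k) (hka : k < a) :
    eval ((Complex.exp (2*Real.pi*I/a))^k) (zPp (a+b+c) a b c)
      / eval ((Complex.exp (2*Real.pi*I/a))^k) (derivative (zQp a b c))
    = -(((Real.cot (Real.pi*k*b/a) * Real.cot (Real.pi*k*c/a) : ℝ)) : ℂ) / a := by
  have hζ : IsPrimitiveRoot (Complex.exp (2*Real.pi*I/a)) a :=
    Complex.isPrimitiveRoot_exp a ha.ne'
  set lam : ℂ := (Complex.exp (2*Real.pi*I/a))^k with hlam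
  have hlama : lam^a = 1 := by
    rw [hlam, ← pow_mul, mul_comm k a, pow_mul, hζ.pow_eq_one, one_pow]
  have hlam0 : lam ≠ 0 := by
    intro h0; rw [h0, zero_pow ha.ne'] at hlama; exact zero_ne_one hlama
  have hlamb : lam^b ≠ 1 := fun h => hζ.pow_ne_one_of_pos_of_lt (by omega) hka
    (pow_eq_one_of_coprime hab hlama h)
  have hlamc : lam^c ≠ 1 := fun h => hζ.pow_ne_one_of_pos_of_lt (by omega) hka
    (pow_eq_one_of_coprime hac hlama h)
  -- numerator
  have hnum : eval lam (zPp (a+b+c) a b c) = lam^(a-1) * (lam^b+1) * (lam^c+1) := by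
    have e1 : lam^(a+b+c-1) = lam^(a-1)*lam^b*lam^c := by
      rw [← pow_add, ← pow_add]; congr 1; omega
    have e2 : lam^(b-1) = lam^(a-1)*lam^b := by
      rw [← pow_add, show a-1+b = (b-1)+a from by omega, pow_add, hlama, mul_one]
    have e3 : lam^(c-1) = lam^(a-1)*lam^c := by
      rw [← pow_add, show a-1+c = (c-1)+a from by omega, pow_add, hlama, mul_one]
    simp only [zPp, eval_add, eval_pow, eval_X]
    rw [e1, e2, e3]; ring
  have hden := eval_d_zQp a b c hlama
  -- cot forms
  have hcb : lam^b + 1 = (-I * (Real.cot (Real.pi*k*b/a) : ℂ)) * (lam^b - 1) := by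
    have : lam^b = (Complex.exp ((Real.pi*k*b/a : ℝ) * I))^2 := by
      rw [hlam, ← pow_mul]; exact pow_eq_exp_sq ha k
    rw [this]; exact exp_cot _ (sin_pi_ne ha hab hk1 hka)
  have hcc : lam^c + 1 = (-I * (Real.cot (Real.pi*k*c/a) : ℂ)) * (lam^c - 1) := by
    have : lam^c = (Complex.exp ((Real.pi*k*c/a : ℝ) * I))^2 := by
      rw [hlam, ← pow_mul]; exact pow_eq_exp_sq ha k
    rw [this]; exact exp_cot _ (sin_pi_ne ha hac hk1 hka)
  have hrw : (((Real.cot (Real.pi*k*b/a) * Real.cot (Real.pi*k*c/a) : ℝ)) : ℂ)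
      = ((Real.cot (Real.pi*k*b/a) : ℝ) : ℂ) * ((Real.cot (Real.pi*k*c/a) : ℝ) : ℂ) :=
    Complex.ofReal_mul _ _
  rw [hnum, hden, hcb, hcc, hrw]
  have haC : (a:ℂ) ≠ 0 := Nat.cast_ne_zero.2 ha.ne'
  have hpa : lam^(a-1) ≠ 0 := pow_ne_zero _ hlam0
  have hb1 : lam^b - 1 ≠ 0 := sub_ne_zero.2 hlamb
  have hc1 : lam^c - 1 ≠ 0 := sub_ne_zero.2 hlamc
  set cb := ((Real.cot (Real.pi*k*b/a) : ℝ) : ℂ) with hcbdef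
  set cc := ((Real.cot (Real.pi*k*c/a) : ℝ) : ℂ) with hccdef
  field_simp
  rw [Complex.I_sq]
  ring

lemma family_eq (ha : 0 < a) :
    (nthRootsFinset a (1:ℂ)).erase 1
      = (Finset.Ico 1 a).image (fun k => (Complex.exp (2*Real.pi*I/a))^k) := by
  have hζ : IsPrimitiveRoot (Complex.exp (2*Real.pi*I/a)) a :=
    Complex.isPrimitiveRoot_exp a ha.ne'
  have hfull : nthRootsFinset a (1:ℂ) = (Finset.range a).image (fun k => (Complex.exp (2*Real.pi*I/a))^k) := by
    apply (Finset.eq_of_subset_of_card_le ?_ ?_).symm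
    · intro x hx
      obtain ⟨k, _, rfl⟩ := Finset.mem_image.1 hx
      refine (mem_nthRootsFinset ha 1).2 ?_
      rw [← pow_mul, mul_comm k a, pow_mul, hζ.pow_eq_one, one_pow]
    · rw [hζ.card_nthRootsFinset, Finset.card_image_of_injOn hζ.injOn_pow, Finset.card_range]
  rw [hfull]
  have hrange : Finset.range a = insert 0 (Finset.Ico 1 a) := by
    ext x; simp [Finset.mem_Ico]; omega
  rw [hrange, Finset.image_insert, pow_zero, Finset.erase_insert]
  intro hmem
  obtain ⟨k, hk, hk1⟩ := Finset.mem_image.1 hmem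
  rw [Finset.mem_Ico] at hk
  exact hζ.pow_ne_one_of_pos_of_lt (by omega) hk.2 hk1

lemma family_sum (ha : 0 < a) (hb : 0 < b) (hc : 0 < c)
    (hab : Nat.Coprime a b) (hac : Nat.Coprime a c) :
    ∑ lam ∈ (nthRootsFinset a (1:ℂ)).erase 1,
        eval lam (zPp (a+b+c) a b c) / eval lam (derivative (zQp a b c))
      = ((zagierSum2 a b c : ℝ) : ℂ) := by
  have hζ : IsPrimitiveRoot (Complex.exp (2*Real.pi*I/a)) a :=
    Complex.isPrimitiveRoot_exp a ha.ne'
  rw [family_eq ha, Finset.sum_image (fun i hi j hj h => by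
    rw [Finset.mem_coe, Finset.mem_Ico] at hi hj
    exact hζ.injOn_pow (by simp; omega) (by simp; omega) h)]
  rw [zagierSum2]
  push_cast
  rw [mul_sum]
  refine Finset.sum_congr rfl fun k hk => ?_
  rw [Finset.mem_Ico] at hk
  rw [term_eval ha hb hc hab hac hk.1 hk.2]
  push_cast
  ring

end

lemma dd_mul (p q : ℂ[X]) : derivative (derivative (p*q))
    = derivative (derivative p) * q + 2*(derivative p * derivative q)
      + p * derivative (derivative q) := by
  simp only [derivative_mul, derivative_add]
  ring

lemma X_sub_C_one : (X - C (1:ℂ)) = X - 1 := by rw [map_one]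

lemma cube_eval0 (B : ℂ[X]) : eval 1 ((X - C 1)^3 * B) = 0 := by
  simp

lemma cube_eval1 (B : ℂ[X]) : eval 1 (derivative ((X - C 1)^3 * B)) = 0 := by
  simp [derivative_mul, derivative_pow]

lemma cube_eval2 (B : ℂ[X]) : eval 1 (derivative (derivative ((X - C 1)^3 * B))) = 0 := by
  simp [derivative_mul, derivative_pow]

lemma cast1 {m : ℕ} (hm : 1 ≤ m) : ((m-1:ℕ):ℂ) = (m:ℂ) - 1 := by
  push_cast [Nat.cast_sub hm]; ring

lemma cast2 {m : ℕ} (hm : 1 ≤ m) : ((m-1:ℕ):ℂ) * ((m-1-1:ℕ):ℂ) = ((m:ℂ)-1)*((m:ℂ)-2) := by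
  rcases Nat.lt_or_ge m 2 with h | h
  · interval_cases m
    · simp
  · have h1 : ((m-1-1:ℕ):ℂ) = (m:ℂ) - 2 := by
      have : m - 1 - 1 = m - 2 := by omega
      rw [this, Nat.cast_sub h]; push_cast; ring
    rw [cast1 hm, h1]

theorem sum_r (a b c : ℕ) (ha : 0 < a) (hb : 0 < b) (hc : 0 < c)
    (hab : Nat.Coprime a b) (hac : Nat.Coprime a c) (hbc : Nat.Coprime b c) :
    ∑ lam ∈ ((nthRootsFinset a (1:ℂ)).erase 1 ∪ (nthRootsFinset b (1:ℂ)).erase 1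
        ∪ (nthRootsFinset c (1:ℂ)).erase 1),
      eval lam (zPp (a+b+c) a b c) / eval lam (derivative (zQp a b c))
    = 1 - ((a:ℂ)^2+(b:ℂ)^2+(c:ℂ)^2)/(3*(a:ℂ)*(b:ℂ)*(c:ℂ)) := by
  set n := a + b + c with hn
  set Fa := (nthRootsFinset a (1:ℂ)).erase 1 with hFa
  set Fb := (nthRootsFinset b (1:ℂ)).erase 1 with hFb
  set Fc := (nthRootsFinset c (1:ℂ)).erase 1 with hFc
  set S := Fa ∪ Fb ∪ Fc with hS
  set P := zPp n a b c with hP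
  set Qq := zQp a b c with hQq
  set Q0 := zq a * zq b * zq c with hQ0
  set r : ℂ → ℂ := fun lam => eval lam P / eval lam (derivative Qq) with hr
  -- membership facts
  have hmem : ∀ lam ∈ S, lam ≠ 1 ∧ (lam^a = 1 ∨ lam^b = 1 ∨ lam^c = 1) := by
    intro lam hlam
    rw [hS, Finset.mem_union, Finset.mem_union] at hlam
    rcases hlam with (h | h) | h <;>
      rw [Finset.mem_erase] at h <;>
      refine ⟨h.1, ?_⟩
    · exact Or.inl ((mem_nthRootsFinset ha 1).1 h.2)
    · exact Or.inr (Or.inl ((mem_nthRootsFinset hb 1).1 h.2))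
    · exact Or.inr (Or.inr ((mem_nthRootsFinset hc 1).1 h.2))
  -- disjointness
  have hdisj1 : Disjoint Fa Fb := by
    rw [Finset.disjoint_left]
    intro x hx1 hx2
    rw [hFa, Finset.mem_erase] at hx1
    rw [hFb, Finset.mem_erase] at hx2
    exact hx1.1 (pow_eq_one_of_coprime hab ((mem_nthRootsFinset ha 1).1 hx1.2)
      ((mem_nthRootsFinset hb 1).1 hx2.2))
  have hdisj2 : Disjoint (Fa ∪ Fb) Fc := by
    rw [Finset.disjoint_union_left]
    constructor
    · rw [Finset.disjoint_left]
      intro x hx1 hx2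
      rw [hFa, Finset.mem_erase] at hx1
      rw [hFc, Finset.mem_erase] at hx2
      exact hx1.1 (pow_eq_one_of_coprime hac ((mem_nthRootsFinset ha 1).1 hx1.2)
        ((mem_nthRootsFinset hc 1).1 hx2.2))
    · rw [Finset.disjoint_left]
      intro x hx1 hx2
      rw [hFb, Finset.mem_erase] at hx1
      rw [hFc, Finset.mem_erase] at hx2
      exact hx1.1 (pow_eq_one_of_coprime hbc ((mem_nthRootsFinset hb 1).1 hx1.2)
        ((mem_nthRootsFinset hc 1).1 hx2.2))
  -- the product over S
  have hSprod : ∏ lam ∈ S, (X - C lam) = Q0 := by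
    rw [hS, Finset.prod_union hdisj2, Finset.prod_union hdisj1, hFa, hFb, hFc,
      prod_erase_one ha, prod_erase_one hb, prod_erase_one hc]
  have hcardS : S.card = (a-1)+(b-1)+(c-1) := by
    rw [hS, Finset.card_union_of_disjoint hdisj2, Finset.card_union_of_disjoint hdisj1,
      hFa, hFb, hFc, Finset.card_erase_of_mem (one_mem_nthRootsFinset ha),
      Finset.card_erase_of_mem (one_mem_nthRootsFinset hb),
      Finset.card_erase_of_mem (one_mem_nthRootsFinset hc),
      (Complex.isPrimitiveRoot_exp a ha.ne').card_nthRootsFinset,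
      (Complex.isPrimitiveRoot_exp b hb.ne').card_nthRootsFinset,
      (Complex.isPrimitiveRoot_exp c hc.ne').card_nthRootsFinset]
  -- factorization of Qq
  have hQfact : Qq = (X - C 1)^3 * ∏ lam ∈ S, (X - C lam) := by
    rw [hSprod, hQq, hQ0, zQp, ← zq_mul a, ← zq_mul b, ← zq_mul c, X_sub_C_one]
    ring
  -- nonvanishing denominators
  have hden_ne : ∀ lam ∈ S, eval lam (derivative Qq) ≠ 0 := by
    intro lam hlam
    obtain ⟨hne1, hpow⟩ := hmem lam hlam
    have hlam0 : lam ≠ 0 := by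
      rcases hpow with h | h | h <;>
        (intro h0; rw [h0, zero_pow (by omega)] at h; exact zero_ne_one h)
    rcases hpow with h | h | h
    · rw [hQq, eval_d_zQp a b c h]
      refine mul_ne_zero (mul_ne_zero (mul_ne_zero (Nat.cast_ne_zero.2 ha.ne')
        (pow_ne_zero _ hlam0)) ?_) ?_
      · exact sub_ne_zero.2 fun hh => hne1 (pow_eq_one_of_coprime hab h hh)
      · exact sub_ne_zero.2 fun hh => hne1 (pow_eq_one_of_coprime hac h hh)
    · rw [hQq, zQp_symm_bac, eval_d_zQp b a c h]
      refine mul_ne_zero (mul_ne_zero (mul_ne_zero (Nat.cast_ne_zero.2 hb.ne')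
        (pow_ne_zero _ hlam0)) ?_) ?_
      · exact sub_ne_zero.2 fun hh => hne1 (pow_eq_one_of_coprime hab.symm h hh)
      · exact sub_ne_zero.2 fun hh => hne1 (pow_eq_one_of_coprime hbc h hh)
    · rw [hQq, zQp_symm_cab, eval_d_zQp c a b h]
      refine mul_ne_zero (mul_ne_zero (mul_ne_zero (Nat.cast_ne_zero.2 hc.ne')
        (pow_ne_zero _ hlam0)) ?_) ?_
      · exact sub_ne_zero.2 fun hh => hne1 (pow_eq_one_of_coprime hac.symm h hh)
      · exact sub_ne_zero.2 fun hh => hne1 (pow_eq_one_of_coprime hbc.symm h hh)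
  -- the correction polynomials
  set M : ℂ → ℂ[X] := fun lam => (X - C 1)^3 * ∏ mu ∈ S.erase lam, (X - C mu) with hM
  set H : ℂ[X] := P - ∑ lam ∈ S, C (r lam) * M lam with hH
  have hQM : ∀ lam ∈ S, Qq = (X - C lam) * M lam := by
    intro lam hlam
    rw [hQfact, ← Finset.mul_prod_erase _ (fun mu => X - C mu) hlam, hM]
    ring
  have hM_eval : ∀ lam ∈ S, eval lam (M lam) = eval lam (derivative Qq) := by
    intro lam hlam
    have h1 := congrArg derivative (hQM lam hlam)
    rw [derivative_mul] at h1
    have h2 : derivative (X - C lam) = 1 := by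
      simp [derivative_sub]
    rw [h2, one_mul] at h1
    rw [h1]
    simp
  have hHroot : ∀ lam ∈ S, eval lam H = 0 := by
    intro lam hlam
    rw [hH, eval_sub, eval_finset_sum]
    rw [Finset.sum_eq_single_of_mem lam hlam (fun l' hl' hne => by
      rw [eval_mul, eval_C]
      have : eval lam (M l') = 0 := by
        rw [hM, eval_mul]
        have : eval lam (∏ mu ∈ S.erase l', (X - C mu)) = 0 := by
          rw [eval_prod]
          refine Finset.prod_eq_zero (Finset.mem_erase.2 ⟨Ne.symm hne, hlam⟩) ?_
          simp
        rw [this, mul_zero]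
      rw [this, mul_zero])]
    rw [eval_mul, eval_C, hM_eval lam hlam, hr]
    rw [div_mul_cancel₀ _ (hden_ne lam hlam)]
    ring
  -- divisibility
  have hdvd : Q0 ∣ H := by
    rw [← hSprod]
    refine Finset.prod_dvd_of_coprime ?_ ?_
    · intro x hx y hy hxy
      exact isCoprime_X_sub_C_of_isUnit_sub ((sub_ne_zero.2 fun hh => hxy hh).isUnit)
    · intro lam hlam
      exact dvd_iff_isRoot.2 (hHroot lam hlam)
  obtain ⟨T, hT⟩ := hdvd
  -- degrees
  have hQ0monic : Q0.Monic := ((zq_monic ha).mul (zq_monic hb)).mul (zq_monic hc)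
  have hQ0deg : Q0.natDegree = (a-1)+(b-1)+(c-1) := by
    rw [hQ0, ((zq_monic ha).mul (zq_monic hb)).natDegree_mul (zq_monic hc),
      (zq_monic ha).natDegree_mul (zq_monic hb), zq_natDegree ha, zq_natDegree hb,
      zq_natDegree hc]
  have hM_monic : ∀ lam, (M lam).Monic := fun lam =>
    ((monic_X_sub_C 1).pow 3).mul (monic_prod_of_monic _ _ fun mu _ => monic_X_sub_C mu)
  have hM_deg : ∀ lam ∈ S, (M lam).natDegree = n - 1 := by
    intro lam hlam
    rw [hM, ((monic_X_sub_C (1:ℂ)).pow 3).natDegree_mul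
      (monic_prod_of_monic _ _ fun mu _ => monic_X_sub_C mu),
      natDegree_prod_of_monic _ _ fun mu _ => monic_X_sub_C mu]
    simp only [natDegree_pow, natDegree_X_sub_C]
    have hpos : 1 ≤ S.card := Finset.card_pos.2 ⟨lam, hlam⟩
    rw [hcardS] at hpos
    rw [← Finset.card_eq_sum_ones, Finset.card_erase_of_mem hlam, hcardS, hn]
    omega
  -- coefficient extraction at degree n-1
  have hPcoeff : P.coeff (n-1) = 1 := by
    have h1 : ¬ (n-1 = a-1) := by omega
    have h2 : ¬ (n-1 = b-1) := by omega
    have h3 : ¬ (n-1 = c-1) := by omega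
    rw [hP, zPp]
    simp [coeff_X_pow, h1, h2, h3]
  have hHcoeff : H.coeff (n-1) = 1 - ∑ lam ∈ S, r lam := by
    rw [hH, coeff_sub, hPcoeff, finset_sum_coeff]
    have heach : ∀ lam ∈ S, (C (r lam) * M lam).coeff (n-1) = r lam := by
      intro lam hlam
      rw [coeff_C_mul, ← hM_deg lam hlam, (hM_monic lam).coeff_natDegree, mul_one]
    rw [Finset.sum_congr rfl heach]
  -- eval at 1
  have hH1 : eval 1 H = 4 := by
    rw [hH, eval_sub, eval_finset_sum]
    have heach : ∀ lam ∈ S, eval 1 (C (r lam) * M lam) = 0 := by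
      intro lam _
      rw [eval_mul, hM, cube_eval0, mul_zero]
    rw [Finset.sum_congr rfl heach, Finset.sum_const, smul_zero, sub_zero, hP, zPp]
    simp only [eval_add, eval_pow, eval_X, one_pow]
    norm_num
  have hHne : H ≠ 0 := fun h0 => by rw [h0] at hH1; simp at hH1
  have hTne : T ≠ 0 := fun h0 => hHne (by rw [hT, h0, mul_zero])
  have hQ0ne : Q0 ≠ 0 := hQ0monic.ne_zero
  have hHdeg : H.natDegree ≤ n - 1 := by
    rw [hH]
    refine le_trans (natDegree_sub_le _ _) (max_le ?_ ?_)
    · rw [hP, zPp]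
      refine le_trans (natDegree_add_le _ _) (max_le (le_trans (natDegree_add_le _ _)
        (max_le (le_trans (natDegree_add_le _ _) (max_le ?_ ?_)) ?_)) ?_) <;>
        rw [natDegree_X_pow] <;> omega
    · refine natDegree_sum_le_of_forall_le _ _ fun lam hlam => ?_
      refine le_trans (natDegree_mul_le) ?_
      rw [natDegree_C, hM_deg lam hlam]
      omega
  have hTdeg : T.natDegree ≤ 2 := by
    have h1 : H.natDegree = Q0.natDegree + T.natDegree := by
      rw [hT, natDegree_mul hQ0ne hTne]
    rw [h1, hQ0deg] at hHdeg
    omega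
  -- coefficient of Q0 * T at n-1 is T.coeff 2
  have hcoefQT : (Q0 * T).coeff (n-1) = T.coeff 2 := by
    rcases eq_or_lt_of_le hTdeg with h2 | h2
    · have hnd : n - 1 = Q0.natDegree + T.natDegree := by rw [hQ0deg, h2]; omega
      rw [hnd, coeff_mul_degree_add_degree, hQ0monic.leadingCoeff, one_mul, leadingCoeff, h2]
    · have hlt : (Q0 * T).natDegree < n - 1 := by
        refine lt_of_le_of_lt natDegree_mul_le ?_
        rw [hQ0deg]
        omega
      rw [coeff_eq_zero_of_natDegree_lt hlt, coeff_eq_zero_of_natDegree_lt h2]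
  -- master coefficient identity
  have hstar : 1 - ∑ lam ∈ S, r lam = T.coeff 2 := by
    rw [← hHcoeff, hT, hcoefQT]
  -- eval-derivative system at 1
  set W : ℂ[X] := ∑ lam ∈ S, C (r lam) * ∏ mu ∈ S.erase lam, (X - C mu) with hW
  have hHW : H = P - (X - C 1)^3 * W := by
    rw [hH, hW, Finset.mul_sum]
    congr 1
    refine Finset.sum_congr rfl fun lam _ => ?_
    rw [hM]
    ring
  have ev0 : eval 1 H = eval 1 P := by
    rw [hHW, eval_sub, cube_eval0, sub_zero]
  have ev1 : eval 1 (derivative H) = eval 1 (derivative P) := by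
    rw [hHW, derivative_sub, eval_sub, cube_eval1, sub_zero]
  have ev2 : eval 1 (derivative (derivative H)) = eval 1 (derivative (derivative P)) := by
    rw [hHW, derivative_sub, derivative_sub, eval_sub, cube_eval2, sub_zero]
  -- derivative relations for Q0 * T
  have hd1 : derivative H = derivative Q0 * T + Q0 * derivative T := by
    rw [hT, derivative_mul]
  have hd2 : derivative (derivative H)
      = derivative (derivative Q0) * T + 2 * (derivative Q0 * derivative T)
        + Q0 * derivative (derivative T) := by
    rw [hT]
    exact dd_mul Q0 T
  have hnC : ((n:ℕ):ℂ) = (a:ℂ)+(b:ℂ)+(c:ℂ) := by rw [hn]; push_cast; ring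
  -- values of P derivatives at 1
  have evP0 : eval 1 P = 4 := by
    rw [hP, zPp]
    simp only [eval_add, eval_pow, eval_X, one_pow]
    norm_num
  have evP1 : eval 1 (derivative P)
      = ((a:ℂ)+(b:ℂ)+(c:ℂ)-1) + ((a:ℂ)-1) + ((b:ℂ)-1) + ((c:ℂ)-1) := by
    rw [hP, zPp]
    simp only [derivative_add, derivative_X_pow, eval_add, eval_mul, eval_C, eval_pow,
      eval_X, one_pow, mul_one]
    rw [cast1 (show 1 ≤ n by omega), cast1 ha, cast1 hb, cast1 hc, hnC]
  have evP2 : eval 1 (derivative (derivative P))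
      = ((a:ℂ)+(b:ℂ)+(c:ℂ)-1)*((a:ℂ)+(b:ℂ)+(c:ℂ)-2) + ((a:ℂ)-1)*((a:ℂ)-2)
        + ((b:ℂ)-1)*((b:ℂ)-2) + ((c:ℂ)-1)*((c:ℂ)-2) := by
    rw [hP, zPp]
    simp only [derivative_add, derivative_X_pow, derivative_C_mul, eval_add, eval_mul,
      eval_C, eval_pow, eval_X, one_pow, mul_one]
    rw [cast2 (show 1 ≤ n by omega), cast2 ha, cast2 hb, cast2 hc, hnC]
  -- values of Q0 derivatives at 1
  have hdQ0 : derivative Q0 = derivative (zq a) * zq b * zq c + zq a * derivative (zq b) * zq c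
      + zq a * zq b * derivative (zq c) := by
    rw [hQ0]
    simp only [derivative_mul]
    ring
  have hddQ0 : derivative (derivative Q0)
      = derivative (derivative (zq a)) * zq b * zq c
      + zq a * derivative (derivative (zq b)) * zq c
      + zq a * zq b * derivative (derivative (zq c))
      + 2 * (derivative (zq a) * derivative (zq b) * zq c)
      + 2 * (derivative (zq a) * zq b * derivative (zq c))
      + 2 * (zq a * derivative (zq b) * derivative (zq c)) := by
    rw [hdQ0]
    simp only [derivative_add, derivative_mul]
    ring
  have evQ0 : eval 1 Q0 = (a:ℂ)*(b:ℂ)*(c:ℂ) := by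
    rw [hQ0]
    simp only [eval_mul, eval_zq]
  have evQ1 : eval 1 (derivative Q0)
      = (a:ℂ)*((a:ℂ)-1)/2*(b:ℂ)*(c:ℂ) + (a:ℂ)*((b:ℂ)*((b:ℂ)-1)/2)*(c:ℂ)
        + (a:ℂ)*(b:ℂ)*((c:ℂ)*((c:ℂ)-1)/2) := by
    rw [hdQ0]
    simp only [eval_add, eval_mul, eval_zq, eval_d_zq]
  have evQ2 : eval 1 (derivative (derivative Q0))
      = (a:ℂ)*((a:ℂ)-1)*((a:ℂ)-2)/3*(b:ℂ)*(c:ℂ)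
      + (a:ℂ)*((b:ℂ)*((b:ℂ)-1)*((b:ℂ)-2)/3)*(c:ℂ)
      + (a:ℂ)*(b:ℂ)*((c:ℂ)*((c:ℂ)-1)*((c:ℂ)-2)/3)
      + 2*((a:ℂ)*((a:ℂ)-1)/2*((b:ℂ)*((b:ℂ)-1)/2)*(c:ℂ))
      + 2*((a:ℂ)*((a:ℂ)-1)/2*(b:ℂ)*((c:ℂ)*((c:ℂ)-1)/2))
      + 2*((a:ℂ)*((b:ℂ)*((b:ℂ)-1)/2)*((c:ℂ)*((c:ℂ)-1)/2)) := by
    rw [hddQ0]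
    simp only [eval_add, eval_mul, eval_ofNat, eval_zq, eval_d_zq, eval_dd_zq]
  -- second derivative of T at 1
  have hT2 : eval 1 (derivative (derivative T)) = T.coeff 2 * 2 := by
    have g1 := natDegree_derivative_le T
    have g2 := natDegree_derivative_le (derivative T)
    have hdeg2 : (derivative (derivative T)).natDegree ≤ 0 := by omega
    rw [eq_C_of_natDegree_le_zero hdeg2, eval_C, coeff_derivative, coeff_derivative]
    push_cast
    ring
  -- the linear system
  have hs0 : (4:ℂ) = (a:ℂ)*(b:ℂ)*(c:ℂ) * eval 1 T := by
    rw [← evQ0, ← evP0, ← ev0, hT, eval_mul]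
  have hs1 : ((a:ℂ)+(b:ℂ)+(c:ℂ)-1) + ((a:ℂ)-1) + ((b:ℂ)-1) + ((c:ℂ)-1)
      = ((a:ℂ)*((a:ℂ)-1)/2*(b:ℂ)*(c:ℂ) + (a:ℂ)*((b:ℂ)*((b:ℂ)-1)/2)*(c:ℂ)
        + (a:ℂ)*(b:ℂ)*((c:ℂ)*((c:ℂ)-1)/2)) * eval 1 T
        + (a:ℂ)*(b:ℂ)*(c:ℂ) * eval 1 (derivative T) := by
    rw [← evQ0, ← evQ1, ← evP1, ← ev1, hd1, eval_add, eval_mul, eval_mul]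
  have hs2 : ((a:ℂ)+(b:ℂ)+(c:ℂ)-1)*((a:ℂ)+(b:ℂ)+(c:ℂ)-2) + ((a:ℂ)-1)*((a:ℂ)-2)
        + ((b:ℂ)-1)*((b:ℂ)-2) + ((c:ℂ)-1)*((c:ℂ)-2)
      = ((a:ℂ)*((a:ℂ)-1)*((a:ℂ)-2)/3*(b:ℂ)*(c:ℂ)
          + (a:ℂ)*((b:ℂ)*((b:ℂ)-1)*((b:ℂ)-2)/3)*(c:ℂ)
          + (a:ℂ)*(b:ℂ)*((c:ℂ)*((c:ℂ)-1)*((c:ℂ)-2)/3)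
          + 2*((a:ℂ)*((a:ℂ)-1)/2*((b:ℂ)*((b:ℂ)-1)/2)*(c:ℂ))
          + 2*((a:ℂ)*((a:ℂ)-1)/2*(b:ℂ)*((c:ℂ)*((c:ℂ)-1)/2))
          + 2*((a:ℂ)*((b:ℂ)*((b:ℂ)-1)/2)*((c:ℂ)*((c:ℂ)-1)/2))) * eval 1 T
        + 2 * ((a:ℂ)*((a:ℂ)-1)/2*(b:ℂ)*(c:ℂ) + (a:ℂ)*((b:ℂ)*((b:ℂ)-1)/2)*(c:ℂ)
            + (a:ℂ)*(b:ℂ)*((c:ℂ)*((c:ℂ)-1)/2)) * eval 1 (derivative T)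
        + (a:ℂ)*(b:ℂ)*(c:ℂ) * (T.coeff 2 * 2) := by
    rw [← hT2, ← evQ0, ← evQ1, ← evQ2, ← evP2, ← ev2, hd2, eval_add, eval_add, eval_mul,
      eval_mul, eval_mul, eval_mul, eval_ofNat]
    ring
  -- solve the linear system
  have hA : (a:ℂ) ≠ 0 := Nat.cast_ne_zero.2 ha.ne'
  have hB : (b:ℂ) ≠ 0 := Nat.cast_ne_zero.2 hb.ne'
  have hC : (c:ℂ) ≠ 0 := Nat.cast_ne_zero.2 hc.ne'
  have habc : (a:ℂ)*(b:ℂ)*(c:ℂ) ≠ 0 := mul_ne_zero (mul_ne_zero hA hB) hC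
  have u1 : ((a:ℂ)*(b:ℂ)*(c:ℂ))^2 * eval 1 (derivative T)
      = (a:ℂ)*(b:ℂ)*(c:ℂ) * (((a:ℂ)+(b:ℂ)+(c:ℂ)-1) + ((a:ℂ)-1) + ((b:ℂ)-1) + ((c:ℂ)-1))
        - 4 * ((a:ℂ)*((a:ℂ)-1)/2*(b:ℂ)*(c:ℂ) + (a:ℂ)*((b:ℂ)*((b:ℂ)-1)/2)*(c:ℂ)
          + (a:ℂ)*(b:ℂ)*((c:ℂ)*((c:ℂ)-1)/2)) := by
    linear_combination (-((a:ℂ)*(b:ℂ)*(c:ℂ))) * hs1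
      + ((a:ℂ)*((a:ℂ)-1)/2*(b:ℂ)*(c:ℂ) + (a:ℂ)*((b:ℂ)*((b:ℂ)-1)/2)*(c:ℂ)
        + (a:ℂ)*(b:ℂ)*((c:ℂ)*((c:ℂ)-1)/2)) * hs0
  have hx : T.coeff 2 = ((a:ℂ)^2+(b:ℂ)^2+(c:ℂ)^2)/(3*(a:ℂ)*(b:ℂ)*(c:ℂ)) := by
    rw [eq_div_iff (by exact mul_ne_zero (mul_ne_zero (mul_ne_zero three_ne_zero hA) hB) hC)]
    apply mul_left_cancel₀ (show (((a:ℂ)*(b:ℂ)*(c:ℂ))^2 : ℂ) ≠ 0 from pow_ne_zero 2 habc)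
    linear_combination (-(3:ℂ)/2*((a:ℂ)*(b:ℂ)*(c:ℂ))^2) * hs2
      + (-(3:ℂ)*((a:ℂ)*((a:ℂ)-1)/2*(b:ℂ)*(c:ℂ) + (a:ℂ)*((b:ℂ)*((b:ℂ)-1)/2)*(c:ℂ)
          + (a:ℂ)*(b:ℂ)*((c:ℂ)*((c:ℂ)-1)/2))) * u1
      + ((3:ℂ)/2*((a:ℂ)*(b:ℂ)*(c:ℂ)) * ((a:ℂ)*((a:ℂ)-1)*((a:ℂ)-2)/3*(b:ℂ)*(c:ℂ)
          + (a:ℂ)*((b:ℂ)*((b:ℂ)-1)*((b:ℂ)-2)/3)*(c:ℂ)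
          + (a:ℂ)*(b:ℂ)*((c:ℂ)*((c:ℂ)-1)*((c:ℂ)-2)/3)
          + 2*((a:ℂ)*((a:ℂ)-1)/2*((b:ℂ)*((b:ℂ)-1)/2)*(c:ℂ))
          + 2*((a:ℂ)*((a:ℂ)-1)/2*(b:ℂ)*((c:ℂ)*((c:ℂ)-1)/2))
          + 2*((a:ℂ)*((b:ℂ)*((b:ℂ)-1)/2)*((c:ℂ)*((c:ℂ)-1)/2)))) * hs0
  rw [← hx]
  linear_combination -hstar




lemma disj_fam {a b : ℕ} (ha : 0 < a) (hb : 0 < b) (hab : Nat.Coprime a b) :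
    Disjoint ((nthRootsFinset a (1:ℂ)).erase 1) ((nthRootsFinset b (1:ℂ)).erase 1) := by
  rw [Finset.disjoint_left]
  intro x hx1 hx2
  rw [Finset.mem_erase] at hx1 hx2
  exact hx1.1 (pow_eq_one_of_coprime hab ((mem_nthRootsFinset ha 1).1 hx1.2)
    ((mem_nthRootsFinset hb 1).1 hx2.2))

end
end ZagierRecAux

open ZagierRecAux Polynomial Complex in
theorem zagier_reciprocity_dim2 (a₀ a₁ a₂ : ℕ) (h₀ : 0 < a₀) (h₁ : 0 < a₁)
    (h₂ : 0 < a₂) (h₀₁ : Nat.Coprime a₀ a₁) (h₀₂ : Nat.Coprime a₀ a₂)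
    (h₁₂ : Nat.Coprime a₁ a₂) :
    zagierSum2 a₀ a₁ a₂ + zagierSum2 a₁ a₀ a₂ + zagierSum2 a₂ a₀ a₁ =
      1 - ((a₀ : ℝ) ^ 2 + (a₁ : ℝ) ^ 2 + (a₂ : ℝ) ^ 2) / (3 * a₀ * a₁ * a₂) := by
  have hsum := sum_r a₀ a₁ a₂ h₀ h₁ h₂ h₀₁ h₀₂ h₁₂
  have hdisj1 : Disjoint ((nthRootsFinset a₀ (1:ℂ)).erase 1) ((nthRootsFinset a₁ (1:ℂ)).erase 1) :=
    disj_fam h₀ h₁ h₀₁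
  have hdisj2 : Disjoint ((nthRootsFinset a₀ (1:ℂ)).erase 1 ∪ (nthRootsFinset a₁ (1:ℂ)).erase 1)
      ((nthRootsFinset a₂ (1:ℂ)).erase 1) := by
    rw [Finset.disjoint_union_left]
    exact ⟨disj_fam h₀ h₂ h₀₂, disj_fam h₁ h₂ h₁₂⟩
  rw [Finset.sum_union hdisj2, Finset.sum_union hdisj1] at hsum
  have h1 := family_sum h₀ h₁ h₂ h₀₁ h₀₂
  have h2 := family_sum h₁ h₀ h₂ h₀₁.symm h₁₂
  have h3 := family_sum h₂ h₀ h₁ h₀₂.symm h₁₂.symm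
  have e2q : zQp a₁ a₀ a₂ = zQp a₀ a₁ a₂ := (zQp_symm_bac a₀ a₁ a₂).symm
  have e2p : zPp (a₁+a₀+a₂) a₁ a₀ a₂ = zPp (a₀+a₁+a₂) a₀ a₁ a₂ := by
    rw [show a₁+a₀+a₂ = a₀+a₁+a₂ by omega]
    exact (zPp_symm_bac _ a₀ a₁ a₂).symm
  have e3q : zQp a₂ a₀ a₁ = zQp a₀ a₁ a₂ := (zQp_symm_cab a₀ a₁ a₂).symm
  have e3p : zPp (a₂+a₀+a₁) a₂ a₀ a₁ = zPp (a₀+a₁+a₂) a₀ a₁ a₂ := by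
    rw [show a₂+a₀+a₁ = a₀+a₁+a₂ by omega]
    exact (zPp_symm_cab _ a₀ a₁ a₂).symm
  rw [e2q, e2p] at h2
  rw [e3q, e3p] at h3
  rw [h1, h2, h3] at hsum
  have key : ((zagierSum2 a₀ a₁ a₂ + zagierSum2 a₁ a₀ a₂ + zagierSum2 a₂ a₀ a₁ : ℝ) : ℂ)
      = 1 - ((a₀:ℂ)^2+(a₁:ℂ)^2+(a₂:ℂ)^2)/(3*(a₀:ℂ)*(a₁:ℂ)*(a₂:ℂ)) := by
    push_cast
    linear_combination hsum
  rw [← Complex.ofReal_inj] at *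
  push_cast at key ⊢
  linear_combination key
end

section
/- For coprime positive integers $a$ and $b$, the classical Dedekind sum and Zagier's higher-dimensional Dedekind sum are related by $s(a,b) = -\frac{1}{4} s(b; a, 1)$, i.e. $\sum_{k=0}^{b-1} ((ka/b))((k/b)) = \frac{1}{4b}\sum_{k=1}^{b-1} \cot\frac{\pi k a}{b}\cot\frac{\pi k}{b}$. -/
open Finset Classical in
/-- The sawtooth function `((x))`. -/
noncomputable def saw (x : ℝ) : ℝ :=
  if ∃ m : ℤ, (m : ℝ) = x then 0 else Int.fract x - 1/2


open Finset Complex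

lemma saw_int (m : ℤ) : saw m = 0 := by simp [saw]

lemma saw_of_mem_Ioo {x : ℝ} (h0 : 0 < x) (h1 : x < 1) : saw x = x - 1/2 := by
  rw [saw, if_neg, Int.fract_eq_self.2 ⟨le_of_lt h0, h1⟩]
  rintro ⟨m, rfl⟩
  have h2 : 0 < m := by exact_mod_cast h0
  have h3 : m < 1 := by exact_mod_cast h1
  omega

lemma saw_add_int (x : ℝ) (m : ℤ) : saw (x + m) = saw x := by
  have hiff : (∃ n : ℤ, (n:ℝ) = x + m) ↔ (∃ n : ℤ, (n:ℝ) = x) :=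
    ⟨fun ⟨n, h⟩ => ⟨n - m, by push_cast; linarith⟩,
     fun ⟨n, h⟩ => ⟨n + m, by push_cast; linarith⟩⟩
  rw [saw, saw, Int.fract_add_intCast]
  by_cases h : ∃ n : ℤ, (n:ℝ) = x
  · rw [if_pos (hiff.2 h), if_pos h]
  · rw [if_neg (fun hc => h (hiff.1 hc)), if_neg h]

lemma saw_neg (x : ℝ) : saw (-x) = - saw x := by
  by_cases h : ∃ n : ℤ, (n:ℝ) = x
  · have h' : ∃ n : ℤ, (n:ℝ) = -x := ⟨-h.choose, by push_cast; rw [h.choose_spec]⟩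
    simp [saw, h, h']
  · have h' : ¬ ∃ n : ℤ, (n:ℝ) = -x := by
      rintro ⟨n, hn⟩; exact h ⟨-n, by push_cast; linarith⟩
    have hf : Int.fract x ≠ 0 := by
      intro hf
      exact h ⟨⌊x⌋, by have := Int.fract_add_floor x; rw [← Int.self_sub_floor] at hf; linarith [Int.floor_le x]⟩
    rw [saw, saw, if_neg h, if_neg h', Int.fract_neg hf]; ring

noncomputable def ee (b : ℕ) (m : ℤ) : ℂ := Complex.exp (2 * Real.pi * Complex.I * m / b)

lemma ee_add (b : ℕ) (m n : ℤ) : ee b (m + n) = ee b m * ee b n := by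
  rw [ee, ee, ee, ← Complex.exp_add]; congr 1; push_cast; ring

lemma ee_mul_nat (b : ℕ) (m : ℤ) (n : ℕ) : ee b (m * n) = (ee b m) ^ n := by
  induction n with
  | zero => simp [ee]
  | succ k ih =>
      rw [show (m * ((k:ℕ)+1:ℕ) : ℤ) = m * k + m by push_cast; ring, ee_add, ih, pow_succ]

lemma ee_eq_one_iff {b : ℕ} (hb : 0 < b) (m : ℤ) : ee b m = 1 ↔ (b:ℤ) ∣ m := by
  have hb' : (b:ℂ) ≠ 0 := Nat.cast_ne_zero.2 hb.ne'
  have h2 : (2 * (Real.pi:ℂ) * Complex.I) ≠ 0 := by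
    simp [Real.pi_ne_zero, Complex.I_ne_zero]
  rw [ee, Complex.exp_eq_one_iff]
  constructor
  · rintro ⟨n, hn⟩
    refine ⟨n, ?_⟩
    have hc : (m : ℂ) = b * n := by
      field_simp at hn
      have h3 : 2 * (Real.pi:ℂ) * Complex.I * (m:ℂ) = 2 * (Real.pi:ℂ) * Complex.I * ((b:ℂ) * n) := by
        linear_combination (2 * (Real.pi:ℂ) * Complex.I) * hn
      exact mul_left_cancel₀ h2 h3
    exact_mod_cast hc
  · rintro ⟨n, rfl⟩
    refine ⟨n, ?_⟩
    push_cast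
    field_simp

lemma sum_ee {b : ℕ} (hb : 0 < b) (m : ℤ) :
    ∑ k ∈ range b, ee b (m * k) = if (b:ℤ) ∣ m then (b:ℂ) else 0 := by
  rw [Finset.sum_congr rfl fun k _ => ee_mul_nat b m k]
  by_cases hd : (b:ℤ) ∣ m
  · rw [if_pos hd, (ee_eq_one_iff hb m).2 hd]
    simp
  · rw [if_neg hd, geom_sum_eq (fun hc => hd ((ee_eq_one_iff hb m).1 hc))]
    have hone : ee b m ^ b = 1 := by
      rw [← ee_mul_nat, ee_eq_one_iff hb]
      exact ⟨m, mul_comm m b⟩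
    rw [hone]
    simp

lemma sum_nat_mul_pow (b : ℕ) (z : ℂ) (hz1 : z ≠ 1) (hzb : z ^ b = 1) :
    ∑ j ∈ range b, (j : ℂ) * z ^ j = b / (z - 1) := by
  have hz : z - 1 ≠ 0 := sub_ne_zero.2 hz1
  rw [eq_div_iff hz, Finset.sum_mul]
  have hgeom : ∑ j ∈ range b, z ^ (j+1) = 0 := by
    have : ∑ j ∈ range b, z ^ (j+1) = z * ∑ j ∈ range b, z ^ j := by
      rw [Finset.mul_sum]; exact Finset.sum_congr rfl fun j _ => by ring
    rw [this, geom_sum_eq hz1, hzb]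
    simp
  calc ∑ j ∈ range b, (j:ℂ) * z ^ j * (z - 1)
      = ∑ j ∈ range b, ((((j:ℕ)+1:ℕ):ℂ) * z ^ (j+1) - (j:ℂ) * z ^ j) - ∑ j ∈ range b, z ^ (j+1) := by
        rw [← Finset.sum_sub_distrib]
        exact Finset.sum_congr rfl fun j _ => by push_cast; ring
    _ = (b:ℂ) * z ^ b - 0 * z ^ 0 - 0 := by
        rw [Finset.sum_range_sub (fun j => (j:ℂ) * z ^ j), hgeom]; norm_num
    _ = (b:ℂ) := by rw [hzb]; ring

lemma saw_zero : saw 0 = 0 := by simpa using saw_int 0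

lemma cast_ne (b : ℕ) (hb : 0 < b) : (b:ℝ) ≠ 0 := Nat.cast_ne_zero.2 hb.ne'

lemma sum_saw {b : ℕ} (hb : 0 < b) : ∑ j ∈ range b, saw ((j:ℝ)/b) = 0 := by
  have hb' : (b:ℝ) ≠ 0 := cast_ne b hb
  have hterm : ∀ j ∈ range b, saw ((j:ℝ)/b)
      = ((j:ℝ)/b - 1/2) + (if j = 0 then (1:ℝ)/2 else 0) := by
    intro j hj
    rcases Nat.eq_zero_or_pos j with rfl | hj0
    · simp [saw_zero]
    · have hjb : j < b := Finset.mem_range.1 hj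
      rw [saw_of_mem_Ioo (by positivity) (by rw [div_lt_one (by positivity)]; exact_mod_cast hjb),
        if_neg hj0.ne', add_zero]
  rw [Finset.sum_congr rfl hterm, Finset.sum_add_distrib, Finset.sum_ite_eq' (range b) 0 (fun _ => (1:ℝ)/2),
    if_pos (Finset.mem_range.2 hb)]
  have hgauss : (∑ j ∈ range b, (j:ℝ)) = b * (b - 1) / 2 := by
    have h := Finset.sum_range_id_mul_two b
    have h2 := congrArg (Nat.cast : ℕ → ℝ) h
    push_cast [Nat.cast_sub hb] at h2
    linarith
  rw [Finset.sum_sub_distrib, ← Finset.sum_div, hgauss]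
  rw [Finset.sum_const, Finset.card_range]
  field_simp
  ring

lemma F_eq {b : ℕ} (hb : 0 < b) (m : ℤ) (hm : ¬ (b:ℤ) ∣ m) :
    ∑ j ∈ range b, (saw ((j:ℝ)/b) : ℂ) * ee b (m * j)
      = (ee b m + 1) / (2 * (ee b m - 1)) := by
  have hb' : (b:ℂ) ≠ 0 := Nat.cast_ne_zero.2 hb.ne'
  set z := ee b m with hz
  have hz1 : z ≠ 1 := fun hc => hm ((ee_eq_one_iff hb m).1 hc)
  have hzb : z ^ b = 1 := by
    rw [hz, ← ee_mul_nat, ee_eq_one_iff hb]; exact ⟨m, mul_comm m b⟩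
  have hzne : z - 1 ≠ 0 := sub_ne_zero.2 hz1
  have hterm : ∀ j ∈ range b, (saw ((j:ℝ)/b) : ℂ) * ee b (m * j)
      = ((j:ℂ)/b - 1/2) * z ^ j + (if j = 0 then (1:ℂ)/2 else 0) := by
    intro j hj
    rw [ee_mul_nat]
    rcases Nat.eq_zero_or_pos j with rfl | hj0
    · simp [saw_zero]
    · have hjb : j < b := Finset.mem_range.1 hj
      have hbR : (0:ℝ) < b := Nat.cast_pos.2 hb
      rw [saw_of_mem_Ioo (by positivity) (by rw [div_lt_one hbR]; exact_mod_cast hjb),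
        if_neg hj0.ne', add_zero]
      push_cast
      ring
  rw [Finset.sum_congr rfl hterm, Finset.sum_add_distrib,
    Finset.sum_ite_eq' (range b) 0 (fun _ => (1:ℂ)/2), if_pos (Finset.mem_range.2 hb)]
  have hsplit : ∑ j ∈ range b, ((j:ℂ)/b - 1/2) * z ^ j
      = (1/(b:ℂ)) * (∑ j ∈ range b, (j:ℂ) * z ^ j) - (1/2) * ∑ j ∈ range b, z ^ j := by
    rw [Finset.mul_sum, Finset.mul_sum, ← Finset.sum_sub_distrib]
    exact Finset.sum_congr rfl fun j _ => by ring
  rw [hsplit, sum_nat_mul_pow b z hz1 hzb, geom_sum_eq hz1, hzb]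
  field_simp
  ring

lemma cot_eq_ee {b : ℕ} (hb : 0 < b) (m : ℤ) (hm : ¬ (b:ℤ) ∣ m) :
    ((Real.cot (Real.pi * m / b)) : ℂ) = Complex.I * (ee b m + 1) / (ee b m - 1) := by
  have hb' : (b:ℂ) ≠ 0 := Nat.cast_ne_zero.2 hb.ne'
  have harg : ((Real.pi * m / b : ℝ) : ℂ) = (Real.pi : ℂ) * ((m:ℂ)/b) := by push_cast; ring
  rw [Complex.ofReal_cot, harg, Complex.cot_pi_eq_exp_ratio]
  have hE : Complex.exp (2 * (Real.pi:ℂ) * Complex.I * ((m:ℂ)/b)) = ee b m := by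
    rw [ee]; congr 1; ring
  rw [hE]
  set z := ee b m
  have hz1 : z ≠ 1 := fun hc => hm ((ee_eq_one_iff hb m).1 hc)
  have hzne : z - 1 ≠ 0 := sub_ne_zero.2 hz1
  have hd : Complex.I * (1 - z) ≠ 0 := by
    refine mul_ne_zero Complex.I_ne_zero ?_
    intro hc
    exact hz1 (by linear_combination -hc)
  rw [div_eq_div_iff hd hzne]
  linear_combination (-(z+1)*(1-z)) * Complex.I_sq
theorem dedekindSum_eq_neg_quarter_zagier (a b : ℕ) (ha : 0 < a) (hb : 0 < b)
    (hab : Nat.Coprime a b) :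
    ∑ k ∈ Finset.range b, saw (k * a / b) * saw (k / b) =
      1 / (4 * b) * ∑ k ∈ Finset.Ico 1 b,
        Real.cot (Real.pi * k * a / b) * Real.cot (Real.pi * k / b) := by
  have hbz : (0:ℤ) < (b:ℤ) := Int.natCast_pos.2 hb
  have hbR : (0:ℝ) < (b:ℝ) := Nat.cast_pos.2 hb
  set G : ℤ → ℂ := fun m => ∑ j ∈ range b, (saw ((j:ℝ)/b) : ℂ) * ee b (m * j) with hG
  set L : ℝ := ∑ k ∈ Finset.range b, saw (k * a / b) * saw (k / b) with hL
  set T : ℝ := ∑ k ∈ Finset.Ico 1 b,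
      Real.cot (Real.pi * k * a / b) * Real.cot (Real.pi * k / b) with hT
  -- divisibility facts for k ∈ Ico 1 b
  have hndvd : ∀ k : ℕ, 1 ≤ k → k < b → ¬ (b:ℤ) ∣ (k:ℤ) := by
    intro k h1 h2 hc
    have : b ∣ k := Int.natCast_dvd_natCast.1 hc
    exact absurd (Nat.le_of_dvd h1 this) (not_le.2 h2)
  have hndvd' : ∀ k : ℕ, 1 ≤ k → k < b → ¬ (b:ℤ) ∣ ((k:ℤ) * (a:ℤ)) := by
    intro k h1 h2 hc
    have hc' : b ∣ k * a := by exact_mod_cast hc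
    exact hndvd k h1 h2 (Int.natCast_dvd_natCast.2 (hab.symm.dvd_of_dvd_mul_right hc'))
  -- Way 2 : cotangent side
  have way2 : ∑ k ∈ range b, G ((k:ℤ) * (a:ℤ)) * G (k:ℤ) = -(1/4) * (T:ℂ) := by
    have hsplit : ∑ k ∈ range b, G ((k:ℤ) * (a:ℤ)) * G (k:ℤ)
        = G 0 * G 0 + ∑ k ∈ Ico 1 b, G ((k:ℤ) * (a:ℤ)) * G (k:ℤ) := by
      rw [Finset.range_eq_Ico, Finset.sum_eq_sum_Ico_succ_bot hb]
      norm_num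
    have hG0 : G 0 = 0 := by
      rw [hG]
      simp only [zero_mul, ee, Int.cast_zero, Complex.ofReal_zero, mul_zero, zero_div,
        Complex.exp_zero, mul_one]
      rw [← Complex.ofReal_sum]
      rw [sum_saw hb]
      simp
    rw [hsplit, hG0, zero_mul, zero_add, hT]
    rw [Complex.ofReal_sum, Finset.mul_sum]
    refine Finset.sum_congr rfl fun k hk => ?_
    obtain ⟨hk1, hk2⟩ := Finset.mem_Ico.1 hk
    have h1 := hndvd k hk1 hk2
    have h2 := hndvd' k hk1 hk2
    simp only [hG]
    rw [F_eq hb _ h2, F_eq hb _ h1]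
    have hc1 : Real.cot (Real.pi * k * a / b) = Real.cot (Real.pi * (((k:ℤ)*(a:ℤ) : ℤ) : ℝ) / b) := by
      congr 1; push_cast; ring
    have hc2 : Real.cot (Real.pi * k / b) = Real.cot (Real.pi * (((k:ℤ) : ℤ) : ℝ) / b) := by
      congr 1
    rw [Complex.ofReal_mul, hc1, hc2, cot_eq_ee hb _ h2, cot_eq_ee hb _ h1]
    have hz1 : ee b ((k:ℤ)*(a:ℤ)) - 1 ≠ 0 :=
      sub_ne_zero.2 fun hc => h2 ((ee_eq_one_iff hb _).1 hc)
    have hz2 : ee b (k:ℤ) - 1 ≠ 0 :=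
      sub_ne_zero.2 fun hc => h1 ((ee_eq_one_iff hb _).1 hc)
    have hmul : (Complex.I*(ee b ((k:ℤ)*(a:ℤ))+1)/(ee b ((k:ℤ)*(a:ℤ))-1)) * (Complex.I*(ee b (k:ℤ)+1)/(ee b (k:ℤ)-1))
        = (Complex.I*Complex.I) * ((ee b ((k:ℤ)*(a:ℤ))+1)/(ee b ((k:ℤ)*(a:ℤ))-1)) * ((ee b (k:ℤ)+1)/(ee b (k:ℤ)-1)) := by
      ring
    rw [hmul, Complex.I_mul_I]
    field_simp
    ring
  -- Way 1 : sawtooth side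
  have way1 : ∑ k ∈ range b, G ((k:ℤ) * (a:ℤ)) * G (k:ℤ) = -(b:ℂ) * (L:ℂ) := by
    have hexpand : ∀ k ∈ range b, G ((k:ℤ) * (a:ℤ)) * G (k:ℤ)
        = ∑ j ∈ range b, ∑ l ∈ range b,
            ((saw ((j:ℝ)/b) : ℂ) * (saw ((l:ℝ)/b) : ℂ)) * ee b (((a:ℤ)*(j:ℤ)+(l:ℤ)) * (k:ℤ)) := by
      intro k _
      rw [hG]
      rw [Finset.sum_mul_sum]
      refine Finset.sum_congr rfl fun j _ => Finset.sum_congr rfl fun l _ => ?_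
      rw [show ((saw ((j:ℝ)/b) : ℂ) * ee b ((k:ℤ)*(a:ℤ) * j)) * ((saw ((l:ℝ)/b) : ℂ) * ee b ((k:ℤ) * l))
          = ((saw ((j:ℝ)/b) : ℂ) * (saw ((l:ℝ)/b) : ℂ)) * (ee b ((k:ℤ)*(a:ℤ) * j) * ee b ((k:ℤ) * l)) by ring,
        ← ee_add]
      congr 2
      ring
    rw [Finset.sum_congr rfl hexpand]
    rw [Finset.sum_comm]
    have hswap : ∀ j ∈ range b, ∑ k ∈ range b, ∑ l ∈ range b,
          ((saw ((j:ℝ)/b) : ℂ) * (saw ((l:ℝ)/b) : ℂ)) * ee b (((a:ℤ)*(j:ℤ)+(l:ℤ)) * (k:ℤ))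
        = ∑ l ∈ range b, ((saw ((j:ℝ)/b) : ℂ) * (saw ((l:ℝ)/b) : ℂ))
            * (if (b:ℤ) ∣ ((a:ℤ)*(j:ℤ)+(l:ℤ)) then (b:ℂ) else 0) := by
      intro j _
      rw [Finset.sum_comm]
      refine Finset.sum_congr rfl fun l _ => ?_
      rw [← Finset.mul_sum, ← sum_ee hb]
    rw [Finset.sum_congr rfl hswap]
    -- now the inner sum over l picks the single l0
    have hinner : ∀ j ∈ range b, ∑ l ∈ range b, ((saw ((j:ℝ)/b) : ℂ) * (saw ((l:ℝ)/b) : ℂ))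
            * (if (b:ℤ) ∣ ((a:ℤ)*(j:ℤ)+(l:ℤ)) then (b:ℂ) else 0)
        = (saw ((j:ℝ)/b) : ℂ) * (-(saw (((a:ℕ)*(j:ℕ):ℕ) / (b:ℝ)) : ℝ) : ℂ) * b := by
      intro j _
      set q : ℤ := (-(((a:ℤ))*(j:ℤ))) / (b:ℤ) with hq
      set l0 : ℕ := ((-(((a:ℤ))*(j:ℤ))) % (b:ℤ)).toNat with hl0
      have hl0nn : (0:ℤ) ≤ (-(((a:ℤ))*(j:ℤ))) % (b:ℤ) := Int.emod_nonneg _ hbz.ne'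
      have hl0cast : (l0:ℤ) = (-(((a:ℤ))*(j:ℤ))) % (b:ℤ) := Int.toNat_of_nonneg hl0nn
      have hl0lt : l0 < b := by
        have := Int.emod_lt_of_pos (-(((a:ℤ))*(j:ℤ))) hbz
        omega
      have hl0eq : (l0:ℤ) = -(((a:ℤ))*(j:ℤ)) - (b:ℤ) * q := by
        rw [hl0cast, Int.emod_def, hq]
      have hdvd0 : (b:ℤ) ∣ ((a:ℤ)*(j:ℤ)+(l0:ℤ)) := ⟨-q, by rw [hl0eq]; ring⟩
      rw [Finset.sum_eq_single_of_mem l0 (Finset.mem_range.2 hl0lt) ?uniq]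
      · rw [if_pos hdvd0]
        -- saw (l0 / b) = - saw (a*j/b)
        have hsawl0 : saw ((l0:ℝ)/b) = - saw (((a:ℕ)*(j:ℕ):ℕ) / (b:ℝ)) := by
          have hcast : ((l0:ℝ))/b = -(((a:ℕ)*(j:ℕ):ℕ) / (b:ℝ)) + ((-q : ℤ) : ℝ) := by
            have := congrArg (Int.cast : ℤ → ℝ) hl0eq
            push_cast at this ⊢
            field_simp
            linarith [this]
          rw [hcast, saw_add_int, saw_neg]
        rw [hsawl0]
        push_cast
        ring
      case uniq =>
        intro l hl hlne
        obtain hlb := Finset.mem_range.1 hl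
        rw [if_neg, mul_zero]
        intro hc
        have hdd : (b:ℤ) ∣ ((l:ℤ) - (l0:ℤ)) := by
          have := dvd_sub hc hdvd0
          simpa using this
        have hmod : (l:ℤ) % b = (l0:ℤ) % b :=
          Int.emod_eq_emod_iff_emod_sub_eq_zero.2 (Int.emod_eq_zero_of_dvd hdd)
        rw [Int.emod_eq_of_lt (by positivity) (by exact_mod_cast hlb),
          Int.emod_eq_of_lt (by positivity) (by exact_mod_cast hl0lt)] at hmod
        exact hlne (by exact_mod_cast hmod)
    rw [Finset.sum_congr rfl hinner, hL]
    rw [Complex.ofReal_sum, Finset.mul_sum]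
    refine Finset.sum_congr rfl fun j _ => ?_
    push_cast
    rw [mul_comm (a:ℝ) (j:ℝ)]
    try ring
  -- combine
  have hcomb : (((-(b:ℝ) * L : ℝ)) : ℂ) = (((-(1/4) * T : ℝ)) : ℂ) := by
    push_cast
    rw [← way1, way2]
  have hreal : -(b:ℝ) * L = -(1/4) * T := Complex.ofReal_inj.1 hcomb
  rw [hL] at hreal ⊢
  rw [hT] at hreal ⊢
  rw [one_div, ← div_eq_inv_mul, eq_div_iff (by positivity)]
  linarith
end
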